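/- Let θ ∈ (0, π/2), λ ∈ Σ_θ with |λ| = 1, and let δ_{jk} denote the Kronecker delta. For 1 ≤ j, k ≤ d define m_{jk}(ξ) = (λ + |ξ|²)^{-1}(δ_{jk} − ξ_j ξ_k / |ξ|²) for ξ ∈ ℝ^d \ {0}. Then for every multi-index α with |α| ≤ ⌊d/2⌋ + 1, there is a constant M = M(d, θ, α) such that |ξ|^{|α|} |D^α m_{jk}(ξ)| ≤ M for all ξ ≠ 0. -/

import Mathlib

noncomputable section

/-- directional derivative `∂_i f`. -/
noncomputable def dirDeriv {d : ℕ} (i : Fin d) (f : EuclideanSpace ℝ (Fin d) → ℂ) :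
    EuclideanSpace ℝ (Fin d) → ℂ :=
  fun x => fderiv ℝ f x (EuclideanSpace.single i 1)

/-- iterated partial derivative `D^α` encoded by a list of coordinate directions. -/
noncomputable def multiDeriv {d : ℕ} (L : List (Fin d)) (f : EuclideanSpace ℝ (Fin d) → ℂ) :
    EuclideanSpace ℝ (Fin d) → ℂ :=
  L.foldr dirDeriv f

namespace Stmt1Aux

set_option maxHeartbeats 2000000 in
lemma sector_lower {θ : ℝ} {lam : ℂ} (hθ1 : 0 < θ) (hθ2 : θ < Real.pi/2) (hlam0 : lam ≠ 0)
    (harg : |lam.arg| < Real.pi - θ) (h1 : ‖lam‖ = 1) :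
    ∀ s : ℝ, 0 ≤ s → Real.sin θ * max 1 s ≤ ‖lam + s‖ := by
  intro s hs
  have hpi := Real.pi_pos
  have hsinθ : 0 < Real.sin θ := Real.sin_pos_of_pos_of_lt_pi hθ1 (by linarith)
  set φ := lam.arg with hφ
  have hre : lam.re = Real.cos φ := by
    have := Complex.cos_arg hlam0; rw [h1] at this; field_simp at this; exact this.symm
  have him : lam.im = Real.sin φ := by
    have := Complex.sin_arg lam; rw [h1] at this; field_simp at this; exact this.symm
  have hpyth : Real.sin φ ^ 2 + Real.cos φ ^ 2 = 1 := Real.sin_sq_add_cos_sq φ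
  have habs2 : ‖lam + s‖ ^ 2 = (Real.cos φ + s)^2 + Real.sin φ ^ 2 := by
    rw [Complex.sq_norm, Complex.normSq_apply]
    simp [hre, him]
    ring
  have hsθ1 : Real.sin θ ≤ 1 := Real.sin_le_one θ
  have key : (Real.sin θ * max 1 s)^2 ≤ ‖lam + s‖^2 := by
    rw [habs2]
    rcases le_or_gt 0 (Real.cos φ) with hc | hc
    · rcases max_cases 1 s with ⟨hm, _⟩ | ⟨hm, hm'⟩ <;> rw [hm]
      · nlinarith
      · have h1' : Real.sin θ^2 ≤ 1 := by nlinarith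
        have h2 : (Real.sin θ * s)^2 ≤ s^2 := by
          nlinarith [mul_le_mul_of_nonneg_right h1' (mul_nonneg hs hs)]
        nlinarith [mul_nonneg hc hs, sq_nonneg (Real.cos φ)]
    · have habs : |φ| < Real.pi - θ := harg
      have hcos : Real.cos |φ| = Real.cos φ := by
        rcases abs_cases φ with ⟨h,_⟩|⟨h,_⟩ <;> rw [h] <;> simp
      have hsin2 : Real.sin φ ^ 2 = Real.sin |φ| ^ 2 := by
        rcases abs_cases φ with ⟨h,_⟩|⟨h,_⟩ <;> rw [h] <;> simp
      have hhalf : Real.pi / 2 < |φ| := by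
        by_contra hcon
        push_neg at hcon
        have : 0 ≤ Real.cos |φ| :=
          Real.cos_nonneg_of_mem_Icc ⟨by linarith [abs_nonneg φ], hcon⟩
        rw [hcos] at this; linarith
      have hmono : Real.sin θ < Real.sin (Real.pi - |φ|) := by
        apply Real.strictMonoOn_sin ⟨by linarith, by linarith⟩ ⟨by linarith, by linarith⟩
        linarith
      have hsinφ : Real.sin θ ≤ Real.sin |φ| := by
        rw [Real.sin_pi_sub] at hmono; linarith
      have hsφpos : 0 < Real.sin |φ| := lt_of_lt_of_le hsinθ hsinφ
      rcases max_cases 1 s with ⟨hm, _⟩ | ⟨hm, hm'⟩ <;> rw [hm]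
      · nlinarith
      · have hss : Real.sin θ^2 ≤ Real.sin |φ|^2 := by nlinarith
        nlinarith [sq_nonneg (s * Real.cos φ + 1),
          mul_le_mul_of_nonneg_right hss (mul_nonneg hs hs)]
  exact le_of_pow_le_pow_left₀ two_ne_zero (norm_nonneg _) key

abbrev E (d : ℕ) := EuclideanSpace ℝ (Fin d)

variable {d : ℕ}

/-- coordinate function as a CLM into ℂ -/
def coordC (i : Fin d) : E d →L[ℝ] ℂ := Complex.ofRealCLM.comp (EuclideanSpace.proj i)

lemma coordC_apply (i : Fin d) (ξ : E d) : coordC i ξ = (ξ i : ℂ) := rfl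

lemma coordC_single (i i' : Fin d) :
    coordC i (EuclideanSpace.single i' 1) = if i' = i then 1 else 0 := by
  simp only [coordC_apply, EuclideanSpace.single_apply]
  split <;> simp_all [eq_comm]

def mono (β : List (Fin d)) (ξ : E d) : ℂ := (β.map fun i => (ξ i : ℂ)).prod

lemma mono_nil (ξ : E d) : mono ([] : List (Fin d)) ξ = 1 := rfl

lemma mono_cons (j : Fin d) (β : List (Fin d)) (ξ : E d) :
    mono (j :: β) ξ = (ξ j : ℂ) * mono β ξ := by simp [mono]

lemma mono_append (β γ : List (Fin d)) (ξ : E d) :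
    mono (β ++ γ) ξ = mono β ξ * mono γ ξ := by simp [mono]

def nsq (ξ : E d) : ℂ := (‖ξ‖ : ℂ) ^ 2

lemma nsq_eq_sum (ξ : E d) : nsq ξ = ∑ i, (ξ i : ℂ) ^ 2 := by
  have h : ‖ξ‖ ^ 2 = ∑ i, (ξ i) ^ 2 := by
    rw [EuclideanSpace.norm_eq]
    rw [Real.sq_sqrt (by positivity)]
    simp [sq_abs]
  unfold nsq
  rw [← Complex.ofReal_pow, h]
  push_cast
  ring

lemma nsq_ne_zero {ξ : E d} (hξ : ξ ≠ 0) : nsq ξ ≠ 0 := by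
  simp only [nsq]
  have : ‖ξ‖ ≠ 0 := by simpa using hξ
  exact pow_ne_zero _ (by exact_mod_cast this)

/-- the basic term -/
def T (lam : ℂ) (β : List (Fin d)) (a b : ℕ) (ξ : E d) : ℂ :=
  mono β ξ * ((nsq ξ)⁻¹) ^ a * ((lam + nsq ξ)⁻¹) ^ b

/-- representation class -/
inductive Rep (lam : ℂ) : ℕ → (E d → ℂ) → Prop
  | term (n : ℕ) (β : List (Fin d)) (a b : ℕ) (hb : 1 ≤ b)
      (hdeg : β.length + n + 2 = 2 * a + 2 * b) : Rep lam n (T lam β a b)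
  | zero (n : ℕ) : Rep lam n (fun _ => 0)
  | add {n : ℕ} {f g : E d → ℂ} : Rep lam n f → Rep lam n g →
      Rep lam n (fun ξ => f ξ + g ξ)
  | smul (c : ℂ) {n : ℕ} {f : E d → ℂ} : Rep lam n f → Rep lam n (fun ξ => c * f ξ)
  | congr {n : ℕ} {f g : E d → ℂ} : Rep lam n f → (∀ ξ : E d, ξ ≠ 0 → f ξ = g ξ) →
      Rep lam n g

/-! ### derivatives -/

def Dmono : List (Fin d) → E d → (E d →L[ℝ] ℂ)
  | [], _ => 0
  | j :: tl, ξ => (ξ j : ℂ) • Dmono tl ξ + mono tl ξ • coordC j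

lemma hasFDerivAt_mono (β : List (Fin d)) (ξ : E d) :
    HasFDerivAt (mono β) (Dmono β ξ) ξ := by
  induction β with
  | nil =>
      have : (mono ([] : List (Fin d))) = fun _ : E d => (1 : ℂ) := rfl
      rw [this]
      simpa [Dmono] using hasFDerivAt_const (1 : ℂ) ξ
  | cons j tl ih =>
      have h := ((coordC j).hasFDerivAt (x := ξ)).fun_mul ih
      have heq : (fun ξ : E d => coordC j ξ * mono tl ξ) = mono (j :: tl) := by
        funext ξ; rw [coordC_apply, mono_cons]
      rw [heq] at h
      exact h

def dmono (i : Fin d) : List (Fin d) → E d → ℂ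
  | [], _ => 0
  | j :: tl, ξ => (if i = j then 1 else 0) * mono tl ξ + (ξ j : ℂ) * dmono i tl ξ

lemma Dmono_single (i : Fin d) (β : List (Fin d)) (ξ : E d) :
    Dmono β ξ (EuclideanSpace.single i 1) = dmono i β ξ := by
  induction β with
  | nil => simp [Dmono, dmono]
  | cons j tl ih =>
      simp only [Dmono, dmono, ContinuousLinearMap.add_apply, ContinuousLinearMap.smul_apply,
        coordC_single, ih]
      rw [smul_eq_mul, smul_eq_mul]
      ring

def DN (ξ : E d) : E d →L[ℝ] ℂ := ∑ i, ((ξ i : ℂ) • coordC i + (ξ i : ℂ) • coordC i)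

lemma hasFDerivAt_nsq (ξ : E d) : HasFDerivAt (nsq (d := d)) (DN ξ) ξ := by
  have h : ∀ i ∈ Finset.univ, HasFDerivAt (fun ξ : E d => (ξ i : ℂ) ^ 2)
      ((ξ i : ℂ) • coordC i + (ξ i : ℂ) • coordC i) ξ := by
    intro i _
    have h2 := ((coordC i).hasFDerivAt (x := ξ)).fun_mul ((coordC i).hasFDerivAt (x := ξ))
    have heq : (fun ξ : E d => coordC i ξ * coordC i ξ) = fun ξ : E d => (ξ i : ℂ) ^ 2 := by
      funext ξ; rw [coordC_apply]; ring
    rw [heq] at h2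
    exact h2
  have hsum := HasFDerivAt.fun_sum h
  have heq : (fun ξ : E d => ∑ i, (ξ i : ℂ) ^ 2) = nsq (d := d) := by
    funext ξ; rw [nsq_eq_sum]
  rw [heq] at hsum
  exact hsum

lemma DN_single (i : Fin d) (ξ : E d) :
    DN ξ (EuclideanSpace.single i 1) = 2 * (ξ i : ℂ) := by
  simp only [DN, ContinuousLinearMap.sum_apply, ContinuousLinearMap.add_apply,
    ContinuousLinearMap.smul_apply, coordC_single]
  rw [Finset.sum_eq_single i]
  · simp; ring
  · intro b _ hb; simp [Ne.symm hb]
  · simp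

/-- scalar factor function -/
def phi (lam : ℂ) (a b : ℕ) (z : ℂ) : ℂ := (z⁻¹) ^ a * ((lam + z)⁻¹) ^ b

lemma hasDerivAt_phi (lam : ℂ) (a b : ℕ) {z : ℂ} (hz : z ≠ 0) (hres : lam + z ≠ 0) :
    HasDerivAt (phi lam a b)
      ((↑a * (z⁻¹) ^ (a - 1) * (-1 / z ^ 2)) * ((lam + z)⁻¹) ^ b
        + (z⁻¹) ^ a * (↑b * ((lam + z)⁻¹) ^ (b - 1) * (-1 / (lam + z) ^ 2))) z := by
  have hA : HasDerivAt (fun z : ℂ => (z⁻¹) ^ a) (↑a * (z⁻¹) ^ (a - 1) * (-1 / z ^ 2)) z :=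
    ((hasDerivAt_id z).inv hz).pow a
  have hB : HasDerivAt (fun z : ℂ => ((lam + z)⁻¹) ^ b)
      (↑b * ((lam + z)⁻¹) ^ (b - 1) * (-1 / (lam + z) ^ 2)) z := by
    have hlin : HasDerivAt (fun z : ℂ => lam + z) 1 z := (hasDerivAt_id z).const_add lam
    have h2 := (hlin.fun_inv hres).fun_pow b
    simpa using h2
  exact hA.mul hB

lemma hasFDerivAt_T (lam : ℂ) (β : List (Fin d)) (a b : ℕ) {ξ : E d} (hξ : ξ ≠ 0)
    (hres : lam + nsq ξ ≠ 0) :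
    HasFDerivAt (T lam β a b)
      (mono β ξ •
          (((↑a * ((nsq ξ)⁻¹) ^ (a - 1) * (-1 / (nsq ξ) ^ 2)) * ((lam + nsq ξ)⁻¹) ^ b
            + ((nsq ξ)⁻¹) ^ a * (↑b * ((lam + nsq ξ)⁻¹) ^ (b - 1) * (-1 / (lam + nsq ξ) ^ 2))) •
          DN ξ)
        + ((phi lam a b ∘ nsq) ξ) • Dmono β ξ) ξ := by
  have hn0 := nsq_ne_zero hξ
  have hφ := hasDerivAt_phi lam a b hn0 hres
  have hcomp := hφ.comp_hasFDerivAt ξ (hasFDerivAt_nsq ξ)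
  have hT := (hasFDerivAt_mono β ξ).fun_mul hcomp
  have heq : (fun ξ : E d => mono β ξ * ((phi lam a b) ∘ nsq) ξ) = T lam β a b := by
    funext ξ; simp only [T, phi, Function.comp]; ring
  rw [heq] at hT
  exact hT

lemma neg_one_div_sq (z : ℂ) : -1 / z ^ 2 = -(z⁻¹ * z⁻¹) := by
  rw [neg_div, one_div, ← inv_pow, sq]

lemma dirDeriv_T (lam : ℂ) (β : List (Fin d)) (a b : ℕ) (hb : 1 ≤ b) (i : Fin d) {ξ : E d}
    (hξ : ξ ≠ 0) (hres : lam + nsq ξ ≠ 0) :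
    dirDeriv i (T lam β a b) ξ =
      dmono i β ξ * ((nsq ξ)⁻¹) ^ a * ((lam + nsq ξ)⁻¹) ^ b
      + (-(2 * (a:ℂ))) * ((ξ i : ℂ) * mono β ξ * ((nsq ξ)⁻¹) ^ (a+1) * ((lam + nsq ξ)⁻¹) ^ b)
      + (-(2 * (b:ℂ))) * ((ξ i : ℂ) * mono β ξ * ((nsq ξ)⁻¹) ^ a * ((lam + nsq ξ)⁻¹) ^ (b+1)) := by
  have hT := hasFDerivAt_T lam β a b hξ hres
  have hfd := hT.fderiv
  rw [dirDeriv, hfd]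
  rw [ContinuousLinearMap.add_apply, ContinuousLinearMap.smul_apply,
    ContinuousLinearMap.smul_apply, ContinuousLinearMap.smul_apply, DN_single, Dmono_single]
  simp only [Function.comp, phi, smul_eq_mul, neg_one_div_sq]
  obtain ⟨b', rfl⟩ : ∃ b', b = b' + 1 := ⟨b - 1, by omega⟩
  rcases Nat.eq_zero_or_pos a with rfl | ha
  · push_cast
    simp only [Nat.add_sub_cancel, pow_zero, Nat.zero_sub, Nat.cast_zero]
    ring
  · obtain ⟨a', rfl⟩ : ∃ a', a = a' + 1 := ⟨a - 1, by omega⟩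
    simp only [Nat.add_sub_cancel]
    push_cast
    ring

/-! ### Rep closure under differentiation -/

lemma rep_dmono_aux (lam : ℂ) (i : Fin d) :
    ∀ (β γ : List (Fin d)) (m a b : ℕ), 1 ≤ b →
      γ.length + β.length + m + 1 = 2*a + 2*b →
      Rep lam m (fun ξ => mono γ ξ * dmono i β ξ * ((nsq ξ)⁻¹)^a * ((lam + nsq ξ)⁻¹)^b)
  | [], γ, m, a, b, hb, hdeg => by
      apply Rep.congr (Rep.zero m)
      intro ξ _
      simp [dmono]
  | j :: tl, γ, m, a, b, hb, hdeg => by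
      have h1 : Rep lam m (T lam (γ ++ tl) a b) := by
        apply Rep.term m _ a b hb
        simp only [List.length_append]
        simp only [List.length_cons] at hdeg
        omega
      have hδ := Rep.smul (if i = j then (1:ℂ) else 0) h1
      have h2 := rep_dmono_aux lam i tl (γ ++ [j]) m a b hb (by
        simp only [List.length_append, List.length_cons, List.length_nil] at hdeg ⊢
        omega)
      apply Rep.congr (Rep.add hδ h2)
      intro ξ _
      simp only [T, dmono, mono_append, mono_cons, mono_nil]
      ring

lemma rep_differentiableAt {lam : ℂ} (hres : ∀ ξ : E d, ξ ≠ 0 → lam + nsq ξ ≠ 0)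
    {n : ℕ} {f : E d → ℂ} (h : Rep lam n f) :
    ∀ ξ : E d, ξ ≠ 0 → DifferentiableAt ℝ f ξ := by
  induction h with
  | term n β a b hb hdeg =>
      intro ξ hξ
      exact (hasFDerivAt_T lam β a b hξ (hres ξ hξ)).differentiableAt
  | zero n => intro ξ hξ; exact differentiableAt_const 0
  | add hf hg ihf ihg => intro ξ hξ; exact (ihf ξ hξ).add (ihg ξ hξ)
  | smul c hf ihf => intro ξ hξ; exact (ihf ξ hξ).const_mul c
  | congr hf hfg ihf =>
      intro ξ hξ
      have hev := Filter.eventuallyEq_of_mem (IsOpen.mem_nhds isOpen_compl_singleton hξ) hfg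
      exact (ihf ξ hξ).congr_of_eventuallyEq hev.symm

lemma rep_dirDeriv {lam : ℂ} (hres : ∀ ξ : E d, ξ ≠ 0 → lam + nsq ξ ≠ 0)
    {n : ℕ} {f : E d → ℂ} (h : Rep lam n f) (i : Fin d) :
    Rep lam (n+1) (dirDeriv i f) := by
  induction h with
  | term n β a b hb hdeg =>
      have h1 := rep_dmono_aux lam i β [] (n+1) a b hb
        (by simp only [List.length_nil]; omega)
      have h2 : Rep lam (n+1) (T lam (i :: β) (a+1) b) :=
        Rep.term _ _ _ _ hb (by simp only [List.length_cons]; omega)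
      have h3 : Rep lam (n+1) (T lam (i :: β) a (b+1)) :=
        Rep.term _ _ _ _ (by omega) (by simp only [List.length_cons]; omega)
      have hsum := Rep.add (Rep.add h1 (Rep.smul (-(2*(a:ℂ))) h2)) (Rep.smul (-(2*(b:ℂ))) h3)
      apply Rep.congr hsum
      intro ξ hξ
      rw [dirDeriv_T lam β a b hb i hξ (hres ξ hξ)]
      simp only [T, mono_cons, mono_nil]
      ring
  | zero n =>
      apply Rep.congr (Rep.zero (n+1))
      intro ξ hξ
      simp [dirDeriv]
  | @add n f g hf hg ihf ihg =>
      apply Rep.congr (Rep.add ihf ihg)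
      intro ξ hξ
      show dirDeriv i f ξ + dirDeriv i g ξ = _
      rw [dirDeriv, dirDeriv, dirDeriv,
        fderiv_fun_add (rep_differentiableAt hres hf ξ hξ) (rep_differentiableAt hres hg ξ hξ)]
      rfl
  | @smul c n f hf ihf =>
      apply Rep.congr (Rep.smul c ihf)
      intro ξ hξ
      show c * dirDeriv i f ξ = _
      rw [dirDeriv, dirDeriv, fderiv_const_mul (rep_differentiableAt hres hf ξ hξ) c]
      rfl
  | @congr n f g hf hfg ihf =>
      apply Rep.congr ihf
      intro ξ hξ
      have hev := Filter.eventuallyEq_of_mem (IsOpen.mem_nhds isOpen_compl_singleton hξ) hfg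
      rw [dirDeriv, dirDeriv, hev.symm.fderiv_eq]

/-! ### bounds -/

lemma coord_abs_le (ξ : E d) (j : Fin d) : |ξ j| ≤ ‖ξ‖ := by
  rw [EuclideanSpace.norm_eq, ← Real.sqrt_sq_eq_abs]
  apply Real.sqrt_le_sqrt
  have := Finset.single_le_sum (f := fun i => ξ i ^ 2) (fun i _ => sq_nonneg _) (Finset.mem_univ j)
  simpa [Real.norm_eq_abs, sq_abs] using this

lemma abs_mono_le (β : List (Fin d)) (ξ : E d) :
    ‖mono β ξ‖ ≤ ‖ξ‖ ^ β.length := by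
  induction β with
  | nil => simp [mono_nil]
  | cons j tl ih =>
      rw [mono_cons, norm_mul, List.length_cons, pow_succ']
      apply mul_le_mul ?_ ih (norm_nonneg _) (norm_nonneg ξ)
      rw [Complex.norm_real, Real.norm_eq_abs]
      exact coord_abs_le ξ j

lemma abs_nsq (ξ : E d) : ‖nsq ξ‖ = ‖ξ‖^2 := by
  rw [nsq, norm_pow, Complex.norm_real, Real.norm_eq_abs, abs_norm]

lemma T_bound {θ : ℝ} {lam : ℂ} (hsin : 0 < Real.sin θ)
    (hsec : ∀ s : ℝ, 0 ≤ s → Real.sin θ * max 1 s ≤ ‖lam + s‖)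
    (β : List (Fin d)) (a b n : ℕ) (hb : 1 ≤ b) (hdeg : β.length + n + 2 = 2*a + 2*b)
    {ξ : E d} (hξ : ξ ≠ 0) :
    ‖ξ‖^n * ‖T lam β a b ξ‖ ≤ ((Real.sin θ)⁻¹)^b := by
  have hr0 : (0:ℝ) < ‖ξ‖ := norm_pos_iff.mpr hξ
  set r := ‖ξ‖ with hrdef
  set m1 := max 1 (r^2) with hm1
  have hm1pos : (0:ℝ) < m1 := lt_of_lt_of_le one_pos (le_max_left _ _)
  have hm11 : (1:ℝ) ≤ m1 := le_max_left _ _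
  have hcast : nsq ξ = ((r^2 : ℝ) : ℂ) := by rw [nsq]; push_cast; ring
  have hres_lb : Real.sin θ * m1 ≤ ‖lam + nsq ξ‖ := by
    rw [hcast]; exact hsec (r^2) (sq_nonneg r)
  have hsm1pos : 0 < Real.sin θ * m1 := mul_pos hsin hm1pos
  have habsT : ‖T lam β a b ξ‖
      ≤ r^β.length * ((r^2)⁻¹)^a * ((Real.sin θ * m1)⁻¹)^b := by
    rw [T, norm_mul, norm_mul, norm_pow, norm_pow, norm_inv, norm_inv, abs_nsq]
    have hinvle : (‖lam + nsq ξ‖)⁻¹ ≤ (Real.sin θ * m1)⁻¹ :=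
      inv_anti₀ hsm1pos hres_lb
    apply mul_le_mul (mul_le_mul (abs_mono_le β ξ) le_rfl (by positivity) (by positivity))
      (pow_le_pow_left₀ (by positivity) hinvle b) (by positivity) (by positivity)
  have hkey : r^n * (r^β.length * ((r^2)⁻¹)^a * ((Real.sin θ * m1)⁻¹)^b)
      = ((Real.sin θ)⁻¹)^b * ((r^2)^(b-1) * (m1⁻¹)^b) := by
    rw [mul_inv, mul_pow]
    have hpow : r^n * r^β.length = (r^2)^a * (r^2)^(b-1) := by
      rw [← pow_add, ← pow_mul, ← pow_mul, ← pow_add]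
      congr 1
      omega
    have hcancel : (r^2)^a * ((r^2)⁻¹)^a = 1 := by
      rw [← mul_pow, mul_inv_cancel₀ (by positivity), one_pow]
    calc r^n * (r^β.length * ((r^2)⁻¹)^a * (((Real.sin θ)⁻¹)^b * (m1⁻¹)^b))
        = (r^n * r^β.length) * ((r^2)⁻¹)^a * ((Real.sin θ)⁻¹)^b * (m1⁻¹)^b := by ring
      _ = ((r^2)^a * ((r^2)⁻¹)^a) * (r^2)^(b-1) * ((Real.sin θ)⁻¹)^b * (m1⁻¹)^b := by
          rw [hpow]; ring
      _ = ((Real.sin θ)⁻¹)^b * ((r^2)^(b-1) * (m1⁻¹)^b) := by rw [hcancel]; ring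
  have hle1 : (r^2)^(b-1) * (m1⁻¹)^b ≤ 1 := by
    have h2 : (r^2)^(b-1) ≤ m1^b := by
      calc (r^2)^(b-1) ≤ m1^(b-1) := pow_le_pow_left₀ (sq_nonneg r) (le_max_right 1 (r^2)) _
        _ ≤ m1^b := pow_le_pow_right₀ hm11 (by omega)
    calc (r^2)^(b-1) * (m1⁻¹)^b ≤ m1^b * (m1⁻¹)^b :=
          mul_le_mul_of_nonneg_right h2 (by positivity)
      _ = 1 := by rw [← mul_pow, mul_inv_cancel₀ (by positivity), one_pow]
  calc r^n * ‖T lam β a b ξ‖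
      ≤ r^n * (r^β.length * ((r^2)⁻¹)^a * ((Real.sin θ * m1)⁻¹)^b) :=
        mul_le_mul_of_nonneg_left habsT (by positivity)
    _ = ((Real.sin θ)⁻¹)^b * ((r^2)^(b-1) * (m1⁻¹)^b) := hkey
    _ ≤ ((Real.sin θ)⁻¹)^b * 1 := mul_le_mul_of_nonneg_left hle1 (by positivity)
    _ = ((Real.sin θ)⁻¹)^b := mul_one _

lemma rep_bound {θ : ℝ} {lam : ℂ} (hsin : 0 < Real.sin θ)
    (hsec : ∀ s : ℝ, 0 ≤ s → Real.sin θ * max 1 s ≤ ‖lam + s‖)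
    {n : ℕ} {f : E d → ℂ} (h : Rep lam n f) :
    ∃ M : ℝ, ∀ ξ : E d, ξ ≠ 0 → ‖ξ‖^n * ‖f ξ‖ ≤ M := by
  induction h with
  | term n β a b hb hdeg =>
      exact ⟨((Real.sin θ)⁻¹)^b, fun ξ hξ => T_bound hsin hsec β a b n hb hdeg hξ⟩
  | zero n => exact ⟨0, by simp⟩
  | @add n f g hf hg ihf ihg =>
      obtain ⟨M1, h1⟩ := ihf
      obtain ⟨M2, h2⟩ := ihg
      refine ⟨M1 + M2, fun ξ hξ => ?_⟩
      calc ‖ξ‖^n * ‖f ξ + g ξ‖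
          ≤ ‖ξ‖^n * (‖f ξ‖ + ‖g ξ‖) :=
            mul_le_mul_of_nonneg_left (norm_add_le _ _) (by positivity)
        _ = ‖ξ‖^n * ‖f ξ‖ + ‖ξ‖^n * ‖g ξ‖ := by ring
        _ ≤ M1 + M2 := add_le_add (h1 ξ hξ) (h2 ξ hξ)
  | @smul c n f hf ihf =>
      obtain ⟨M, h1⟩ := ihf
      refine ⟨‖c‖ * M, fun ξ hξ => ?_⟩
      calc ‖ξ‖^n * ‖c * f ξ‖
          = ‖c‖ * (‖ξ‖^n * ‖f ξ‖) := by rw [norm_mul]; ring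
        _ ≤ ‖c‖ * M :=
            mul_le_mul_of_nonneg_left (h1 ξ hξ) (norm_nonneg c)
  | @congr n f g hf hfg ihf =>
      obtain ⟨M, h1⟩ := ihf
      exact ⟨M, fun ξ hξ => by rw [← hfg ξ hξ]; exact h1 ξ hξ⟩

end Stmt1Aux

open Stmt1Aux in
/-- Mikhlin bounds for the Stokes resolvent multiplier
`m_{jk}(ξ) = (λ + |ξ|²)⁻¹ (δ_{jk} - ξ_j ξ_k /|ξ|²)` with `λ ∈ Σ_θ`, `|λ| = 1`:
for every multi-index (list of directions) of length `≤ ⌊d/2⌋ + 1`,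
`|ξ|^{|α|} |D^α m_{jk}(ξ)| ≤ M(d, θ, α)` for all `ξ ≠ 0`. -/
theorem stmt1 (d : ℕ) (θ : ℝ) (hθ : θ ∈ Set.Ioo 0 (Real.pi / 2)) (lam : ℂ)
    (hlam0 : lam ≠ 0) (harg : |lam.arg| < Real.pi - θ) (h1 : ‖lam‖ = 1)
    (j k : Fin d) (L : List (Fin d)) (hL : L.length ≤ d / 2 + 1) :
    ∃ M : ℝ, ∀ ξ : EuclideanSpace ℝ (Fin d), ξ ≠ 0 →
      ‖ξ‖ ^ L.length * ‖(multiDeriv L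
        (fun ξ => (lam + (‖ξ‖ : ℂ) ^ 2)⁻¹ *
          ((if j = k then 1 else 0) - ((ξ j : ℂ) * (ξ k : ℂ)) / (‖ξ‖ : ℂ) ^ 2)) ξ)‖ ≤ M := by

  obtain ⟨hθ1, hθ2⟩ := hθ
  have hsin : 0 < Real.sin θ := Real.sin_pos_of_pos_of_lt_pi hθ1 (by linarith [Real.pi_pos])
  have hsec := sector_lower hθ1 hθ2 hlam0 harg h1
  have hres : ∀ ξ : E d, ξ ≠ 0 → lam + nsq ξ ≠ 0 := by
    intro ξ hξ hcon
    have h2 := hsec (‖ξ‖^2) (sq_nonneg _)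
    have hc : nsq ξ = ((‖ξ‖^2 : ℝ) : ℂ) := by rw [nsq]; push_cast; ring
    rw [← hc, hcon, norm_zero] at h2
    nlinarith [le_max_left (1:ℝ) (‖ξ‖^2), mul_le_mul_of_nonneg_left
      (le_max_left (1:ℝ) (‖ξ‖^2)) hsin.le]
  set m : E d → ℂ := fun ξ => (lam + (‖ξ‖ : ℂ) ^ 2)⁻¹ *
      ((if j = k then 1 else 0) - ((ξ j : ℂ) * (ξ k : ℂ)) / (‖ξ‖ : ℂ) ^ 2) with hm
  have hrep0 : Rep lam 0 m := by
    have ht1 : Rep lam 0 (T lam ([] : List (Fin d)) 0 1) :=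
      Rep.term 0 [] 0 1 le_rfl (by simp)
    have ht2 : Rep lam 0 (T lam [j, k] 1 1) :=
      Rep.term 0 [j, k] 1 1 le_rfl (by simp)
    have hsum := Rep.add (Rep.smul (if j = k then (1:ℂ) else 0) ht1) (Rep.smul (-1) ht2)
    apply Rep.congr hsum
    intro ξ hξ
    have hn0 : nsq ξ ≠ 0 := nsq_ne_zero hξ
    have hr0 : lam + nsq ξ ≠ 0 := hres ξ hξ
    simp only [hm, T, mono_cons, mono_nil]
    show _ = (lam + nsq ξ)⁻¹ * ((if j = k then 1 else 0) - ((ξ j : ℂ) * (ξ k : ℂ)) / nsq ξ)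
    generalize (if j = k then (1:ℂ) else 0) = δ
    field_simp
    ring
  clear hL
  have hrepL : Rep lam L.length (multiDeriv L m) := by
    induction L with
    | nil => exact hrep0
    | cons i L ih => exact rep_dirDeriv hres ih i
  obtain ⟨M, hM⟩ := rep_bound hsin hsec hrepL
  exact ⟨M, hM⟩

end
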